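/- Generalized profit-maximization wedge under a general binding wage constraint: if a demand-constrained firm chooses L to maximize Π(L) = Φ·f(L) − g(Υ(L), W̲)·L where Υ(L) = Φ f(L)/L, and at the interior optimum L* the elasticities λ = (∂g/∂Υ)·Υ/g > 0 and ψ = Υ'(L*)·L*/Υ(L*) = α(L*) − 1 < 0 are well-defined, then the first-order condition takes the form Φ·f'(L*) = (1 + λ·ψ)·g(Υ(L*), W̲), and since 1 + λψ < 1 whenever λ ∈ (0, 1/(1−α(L*))), the wage g(Υ(L*), W̲) strictly exceeds the marginal revenue product Φ·f'(L*). -/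

import Mathlib

/-- Generalized profit-maximization wedge under a general binding wage
constraint. If a demand-constrained firm's profit
`Π(L) = Φ·f(L) − g(Φ·f(L)/L)·L` has zero derivative at an interior optimum `L* > 0`,
then with `Υ* = Φ·f(L*)/L*`, `λ = g'(Υ*)·Υ*/g(Υ*) > 0` and
`ψ = α(L*) − 1 < 0` (where `α(L*) = L*·f'(L*)/f(L*) < 1`), the first-order condition
takes the form `Φ·f'(L*) = (1 + λ·ψ)·g(Υ*)`; and since `1 + λψ < 1` whenever
`λ ∈ (0, 1/(1−α(L*)))`, the wage strictly exceeds the marginal revenue product: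
`Φ·f'(L*) < g(Υ*)`. -/
theorem general_constraint_wage_markup
    (f f' g g' : ℝ → ℝ) (Φ Lstar Υs : ℝ)
    (hL : 0 < Lstar) (hΦ : 0 < Φ)
    (hΥ : Υs = Φ * f Lstar / Lstar)
    (hfd : HasDerivAt f (f' Lstar) Lstar)
    (hgd : HasDerivAt g (g' Υs) Υs)
    (hfpos : 0 < f Lstar) (hf'pos : 0 < f' Lstar)
    (hgpos : 0 < g Υs) (hg'pos : 0 < g' Υs)
    (hαlt : Lstar * f' Lstar / f Lstar < 1)
    (hlam : g' Υs * Υs / g Υs < 1 / (1 - Lstar * f' Lstar / f Lstar))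
    (hfoc : HasDerivAt (fun L : ℝ => Φ * f L - g (Φ * f L / L) * L) 0 Lstar) :
    Φ * f' Lstar
      = (1 + (g' Υs * Υs / g Υs) * (Lstar * f' Lstar / f Lstar - 1)) * g Υs ∧
    Φ * f' Lstar < g Υs := by
  have hLne : Lstar ≠ 0 := ne_of_gt hL
  -- derivative of inner function Υ(L) = Φ f L / L
  have hinner : HasDerivAt (fun L : ℝ => Φ * f L / L)
      ((Φ * f' Lstar * Lstar - Φ * f Lstar) / Lstar ^ 2) Lstar := by
    have h := ((hfd.const_mul Φ).div (hasDerivAt_id Lstar) hLne)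
    rw [mul_one] at h
    exact h
  have hcomp : HasDerivAt (fun L : ℝ => g (Φ * f L / L))
      (g' Υs * ((Φ * f' Lstar * Lstar - Φ * f Lstar) / Lstar ^ 2)) Lstar := by
    have h2 : HasDerivAt (g ∘ (fun L : ℝ => Φ * f L / L))
        (g' Υs * ((Φ * f' Lstar * Lstar - Φ * f Lstar) / Lstar ^ 2)) Lstar :=
      HasDerivAt.comp Lstar (by rwa [← hΥ]) hinner
    simpa [Function.comp_def] using h2
  have hPi : HasDerivAt (fun L : ℝ => Φ * f L - g (Φ * f L / L) * L)
      (Φ * f' Lstar - (g' Υs * ((Φ * f' Lstar * Lstar - Φ * f Lstar) / Lstar ^ 2) * Lstar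
        + g (Φ * f Lstar / Lstar) * 1)) Lstar := by
    exact (hfd.const_mul Φ).sub (hcomp.mul (hasDerivAt_id Lstar))
  rw [← hΥ] at hPi
  have hzero : Φ * f' Lstar - (g' Υs * ((Φ * f' Lstar * Lstar - Φ * f Lstar) / Lstar ^ 2) * Lstar
        + g Υs * 1) = 0 := hPi.unique hfoc
  have hfne : f Lstar ≠ 0 := ne_of_gt hfpos
  have hgne : g Υs ≠ 0 := ne_of_gt hgpos
  have hU : Υs * Lstar = Φ * f Lstar := by
    rw [hΥ]; field_simp
  have heq : Φ * f' Lstar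
      = (1 + (g' Υs * Υs / g Υs) * (Lstar * f' Lstar / f Lstar - 1)) * g Υs := by
    have hzero' : Φ * f' Lstar * Lstar
        - (g' Υs * (Φ * f' Lstar * Lstar - Φ * f Lstar) + g Υs * Lstar) = 0 := by
      have h : (Φ * f' Lstar * Lstar
          - (g' Υs * (Φ * f' Lstar * Lstar - Φ * f Lstar) + g Υs * Lstar)) * Lstar = 0 := by
        field_simp at hzero
        linear_combination Lstar * hzero
      exact (mul_eq_zero.mp h).resolve_right hLne
    field_simp
    apply mul_right_cancel₀ hLne
    linear_combination f Lstar * hzero'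
      - g' Υs * (f' Lstar * Lstar - f Lstar) * hU
  refine ⟨heq, ?_⟩
  have hΥpos : 0 < Υs := by
    rw [hΥ]; positivity
  have hlampos : 0 < g' Υs * Υs / g Υs := by positivity
  have hψneg : Lstar * f' Lstar / f Lstar - 1 < 0 := by linarith
  have : (g' Υs * Υs / g Υs) * (Lstar * f' Lstar / f Lstar - 1) < 0 :=
    mul_neg_of_pos_of_neg hlampos hψneg
  calc Φ * f' Lstar = _ := heq
    _ < 1 * g Υs := by
        apply mul_lt_mul_of_pos_right _ hgpos
        linarith
    _ = g Υs := one_mul _
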